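/- If N_2 = (2+o(1))ε²n and |E(K)| = (2+o(1))ε³n with ε → 0 and ε³n → ∞, then the probability that a fixed degree-2 vertex lies on a disjoint cycle (of any length) in the configuration model is at most (1+o(1))/(4ε³n) = o(1). -/

import Mathlib

open Filter Function

/-- The `b`-th half-edge of the degree-2 vertex `j` among the `2N₂ + 2E` half-edges of
the configuration model (vertex `j < N₂` owns half-edges `2j` and `2j+1`). -/
def halfEdge (N2 E : ℕ) (j : Fin N2) (b : Bool) : Fin (2 * N2 + 2 * E) :=
  ⟨2 * (j : ℕ) + (if b then 0 else 1), by
    have := j.isLt; cases b <;> simp <;> omega⟩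

/-- A uniform perfect matching on half-edges, encoded as a fixed-point free involution. -/
def IsMatching {n : ℕ} (σ : Equiv.Perm (Fin n)) : Prop :=
  ∀ i, σ i ≠ i ∧ σ (σ i) = i

/-- The event that the degree-2 vertex `0` lies on a cycle of length `k` consisting
entirely of degree-2 vertices. -/
def OnDisjointCycle (N2 E k : ℕ) (hN : 0 < N2)
    (σ : Equiv.Perm (Fin (2 * N2 + 2 * E))) : Prop :=
  ∃ (w : ZMod k → Fin N2) (b : ZMod k → Bool),
    Function.Injective w ∧ w 0 = ⟨0, hN⟩ ∧
    ∀ i : ZMod k, σ (halfEdge N2 E (w i) (b i)) =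
      halfEdge N2 E (w (i + 1)) (!b (i + 1))

/-- If `N₂ = (2+o(1))ε²n` and `|E(K)| = (2+o(1))ε³n` with `ε → 0` and `ε³n → ∞`, then
the probability that a fixed degree-2 vertex lies on a disjoint cycle (of any length)
in the configuration model is at most `(1+o(1))/(4ε³n)`, and in particular `o(1)`. -/
noncomputable def M (m : ℕ) : ℕ := Nat.card {σ : Equiv.Perm (Fin m) // IsMatching σ}

section rec
variable {m : ℕ}

noncomputable def gEmb (j : Fin (m+1)) : Fin m → Fin (m+2) :=
  fun x => Fin.castSucc (j.succAbove x)

lemma gEmb_inj (j : Fin (m+1)) : Injective (gEmb j) :=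
  Fin.castSucc_injective _ |>.comp (Fin.succAbove_right_injective)

lemma gEmb_ne_last (j : Fin (m+1)) (x : Fin m) : gEmb j x ≠ Fin.last (m+1) :=
  (Fin.castSucc_lt_last _).ne

lemma gEmb_ne_cast (j : Fin (m+1)) (x : Fin m) : gEmb j x ≠ Fin.castSucc j := by
  simp only [gEmb]
  intro h
  exact Fin.succAbove_ne j x (Fin.castSucc_injective _ h)

lemma mem_range_gEmb {j : Fin (m+1)} {x : Fin (m+2)}
    (h1 : x ≠ Fin.last (m+1)) (h2 : x ≠ Fin.castSucc j) : ∃ y, gEmb j y = x := by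
  obtain ⟨y, rfl⟩ := Fin.exists_castSucc_eq.mpr h1
  have hy : y ≠ j := fun h => h2 (by rw [h])
  obtain ⟨z, rfl⟩ := Fin.exists_succAbove_eq hy
  exact ⟨z, rfl⟩

noncomputable def extFun (j : Fin (m+1)) (τ : Equiv.Perm (Fin m)) :
    Fin (m+2) → Fin (m+2) :=
  fun x => if h : ∃ y, gEmb j y = x then gEmb j (τ h.choose)
    else Equiv.swap (Fin.last (m+1)) (Fin.castSucc j) x

lemma extFun_apply_g (j : Fin (m+1)) (τ : Equiv.Perm (Fin m)) (y : Fin m) :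
    extFun j τ (gEmb j y) = gEmb j (τ y) := by
  have h : ∃ y', gEmb j y' = gEmb j y := ⟨y, rfl⟩
  simp only [extFun, dif_pos h]
  congr 1
  exact congrArg τ (gEmb_inj j h.choose_spec)

lemma extFun_apply_notg (j : Fin (m+1)) (τ : Equiv.Perm (Fin m)) (x : Fin (m+2))
    (h : ¬ ∃ y, gEmb j y = x) :
    extFun j τ x = Equiv.swap (Fin.last (m+1)) (Fin.castSucc j) x := dif_neg h

lemma extFun_invol (j : Fin (m+1)) (τ : Equiv.Perm (Fin m)) (hτ : IsMatching τ) :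
    Involutive (extFun j τ) := by
  intro x
  by_cases h : ∃ y, gEmb j y = x
  · obtain ⟨y, rfl⟩ := h
    rw [extFun_apply_g, extFun_apply_g, (hτ y).2]
  · rw [extFun_apply_notg _ _ _ h]
    have hx : x = Fin.last (m+1) ∨ x = Fin.castSucc j := by
      by_contra hc
      push_neg at hc
      exact h (mem_range_gEmb hc.1 hc.2)
    have hne : Fin.last (m+1) ≠ Fin.castSucc j := (Fin.castSucc_lt_last j).ne'
    rcases hx with rfl | rfl
    · rw [Equiv.swap_apply_left]
      rw [extFun_apply_notg, Equiv.swap_apply_right]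
      rintro ⟨y, hy⟩; exact gEmb_ne_cast j y hy
    · rw [Equiv.swap_apply_right]
      rw [extFun_apply_notg, Equiv.swap_apply_left]
      rintro ⟨y, hy⟩; exact gEmb_ne_last j y hy

noncomputable def extPerm (j : Fin (m+1)) (τ : {τ : Equiv.Perm (Fin m) // IsMatching τ}) :
    Equiv.Perm (Fin (m+2)) :=
  (extFun_invol j τ.1 τ.2).toPerm

lemma extPerm_matching (j : Fin (m+1)) (τ : {τ : Equiv.Perm (Fin m) // IsMatching τ}) :
    IsMatching (extPerm j τ) := by
  intro x
  constructor
  · show extFun j τ.1 x ≠ x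
    by_cases h : ∃ y, gEmb j y = x
    · obtain ⟨y, rfl⟩ := h
      rw [extFun_apply_g]
      exact fun hc => (τ.2 y).1 (gEmb_inj j hc)
    · rw [extFun_apply_notg _ _ _ h]
      have hx : x = Fin.last (m+1) ∨ x = Fin.castSucc j := by
        by_contra hc
        push_neg at hc
        exact h (mem_range_gEmb hc.1 hc.2)
      have hne : Fin.last (m+1) ≠ Fin.castSucc j := (Fin.castSucc_lt_last j).ne'
      rcases hx with rfl | rfl
      · rw [Equiv.swap_apply_left]; exact hne.symm
      · rw [Equiv.swap_apply_right]; exact hne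
  · exact extFun_invol j τ.1 τ.2 x

lemma extPerm_inj :
    Injective (fun p : Fin (m+1) × {τ : Equiv.Perm (Fin m) // IsMatching τ} =>
      (⟨extPerm p.1 p.2, extPerm_matching p.1 p.2⟩ :
        {σ : Equiv.Perm (Fin (m+2)) // IsMatching σ})) := by
  rintro ⟨j, τ⟩ ⟨j', τ'⟩ h
  simp only [Subtype.mk.injEq] at h
  have happ : ∀ x, extFun j τ.1 x = extFun j' τ'.1 x := fun x =>
    congrFun (congrArg (fun (e : Equiv.Perm (Fin (m+2))) => (e : Fin (m+2) → Fin (m+2))) h) x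
  have hlast : ∀ (j₀ : Fin (m+1)) (τ₀ : Equiv.Perm (Fin m)),
      extFun j₀ τ₀ (Fin.last (m+1)) = Fin.castSucc j₀ := by
    intro j₀ τ₀
    rw [extFun_apply_notg, Equiv.swap_apply_left]
    rintro ⟨y, hy⟩; exact gEmb_ne_last j₀ y hy
  have hj : j = j' := by
    have := happ (Fin.last (m+1))
    rw [hlast, hlast] at this
    exact Fin.castSucc_injective _ this
  subst hj
  have hτ : τ.1 = τ'.1 := by
    apply Equiv.ext; intro y
    have := happ (gEmb j y)
    rw [extFun_apply_g, extFun_apply_g] at this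
    exact gEmb_inj j this
  exact Prod.ext rfl (Subtype.ext hτ)

lemma M_rec (m : ℕ) : (m + 1) * M m ≤ M (m + 2) := by
  have := Nat.card_le_card_of_injective _ (extPerm_inj (m := m))
  rwa [Nat.card_prod, Nat.card_eq_fintype_card, Fintype.card_fin] at this

end rec

lemma M_zero_pos : 0 < M 0 := by
  have : ∀ σ : Equiv.Perm (Fin 0), IsMatching σ := fun σ i => i.elim0
  rw [M]
  haveI : Nonempty {σ : Equiv.Perm (Fin 0) // IsMatching σ} := ⟨⟨1, this 1⟩⟩
  exact Nat.card_pos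

lemma M_pos (t : ℕ) : 0 < M (2 * t) := by
  induction t with
  | zero => simpa using M_zero_pos
  | succ t ih =>
    have h1 : 2 * (t + 1) = 2 * t + 2 := by ring
    rw [h1]
    calc 0 < (2 * t + 1) * M (2 * t) := by positivity
      _ ≤ M (2 * t + 2) := M_rec _

lemma M_prod (m k : ℕ) :
    M m * ∏ i ∈ Finset.range k, (m + 2 * i + 1) ≤ M (m + 2 * k) := by
  induction k with
  | zero => simp
  | succ k ih =>
    rw [Finset.prod_range_succ]
    calc M m * ((∏ i ∈ Finset.range k, (m + 2 * i + 1)) * (m + 2 * k + 1))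
        = (m + 2 * k + 1) * (M m * ∏ i ∈ Finset.range k, (m + 2 * i + 1)) := by ring
      _ ≤ (m + 2 * k + 1) * M (m + 2 * k) := Nat.mul_le_mul_left _ ih
      _ ≤ M (m + 2 * k + 2) := M_rec _
      _ = M (m + 2 * (k + 1)) := by ring_nf

def Cyc (N2 E k : ℕ) (w : ZMod k → Fin N2) (b : ZMod k → Bool)
    (σ : Equiv.Perm (Fin (2 * N2 + 2 * E))) : Prop :=
  ∀ i : ZMod k, σ (halfEdge N2 E (w i) (b i)) = halfEdge N2 E (w (i + 1)) (!b (i + 1))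

lemma halfEdge_inj (N2 E : ℕ) {j j' : Fin N2} {c c' : Bool}
    (h : halfEdge N2 E j c = halfEdge N2 E j' c') : j = j' ∧ c = c' := by
  have hv := congrArg Fin.val h
  simp only [halfEdge] at hv
  constructor
  · exact Fin.ext (by cases c <;> cases c' <;> simp at hv <;> omega)
  · cases c <;> cases c' <;> simp at hv <;> first | rfl | (exfalso; omega)

section event
variable (N2 E k : ℕ) (w : ZMod k → Fin N2) (b : ZMod k → Bool)

/-- σ maps the half-edge `(w i, !b i)` backwards along the cycle. -/
lemma cyc_back {σ : Equiv.Perm (Fin (2 * N2 + 2 * E))} (hσ : IsMatching σ)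
    (hc : Cyc N2 E k w b σ) (i : ZMod k) :
    σ (halfEdge N2 E (w i) (!b i)) = halfEdge N2 E (w (i - 1)) (b (i - 1)) := by
  have h2 := hc (i - 1)
  rw [sub_add_cancel] at h2
  rw [← h2, (hσ _).2]

lemma event_inj (hk : 1 ≤ k) (hw : Injective w) :
    ∃ G : {σ : Equiv.Perm (Fin (2 * N2 + 2 * E)) // IsMatching σ ∧ Cyc N2 E k w b σ} →
      {τ : Equiv.Perm (Fin (2 * N2 + 2 * E - 2 * k)) // IsMatching τ},
      Injective G := by
  classical
  haveI : NeZero k := ⟨by omega⟩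
  set m := 2 * N2 + 2 * E with hm
  set S : Finset (Fin m) :=
    Finset.image (fun p : ZMod k × Bool => halfEdge N2 E (w p.1) p.2) Finset.univ with hS
  have hinj2 : Injective (fun p : ZMod k × Bool => halfEdge N2 E (w p.1) p.2) := by
    rintro ⟨i, c⟩ ⟨i', c'⟩ h
    obtain ⟨h1, h2⟩ := halfEdge_inj N2 E h
    exact Prod.ext (hw h1) h2
  have hmemS : ∀ x, x ∈ S ↔ ∃ i c, halfEdge N2 E (w i) c = x := by
    intro x
    simp [hS, Finset.mem_image, Prod.exists]
  have hScard : S.card = 2 * k := by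
    rw [hS, Finset.card_image_of_injective _ hinj2, Finset.card_univ,
      Fintype.card_prod, ZMod.card, Fintype.card_bool]
    ring
  -- invariance
  have hinv : ∀ (σ : Equiv.Perm (Fin m)), IsMatching σ → Cyc N2 E k w b σ →
      ∀ x ∈ S, σ x ∈ S := by
    intro σ hσ hc x hx
    obtain ⟨i, c, rfl⟩ := (hmemS x).1 hx
    by_cases hcb : c = b i
    · subst hcb
      rw [hc i]
      exact (hmemS _).2 ⟨i + 1, !b (i + 1), rfl⟩
    · have hcb' : c = !b i := by cases c <;> cases h : b i <;> simp_all
      subst hcb'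
      rw [cyc_back N2 E k w b hσ hc i]
      exact (hmemS _).2 ⟨i - 1, b (i - 1), rfl⟩
  have hpred : ∀ (σ : Equiv.Perm (Fin m)), IsMatching σ → Cyc N2 E k w b σ →
      ∀ x : Fin m, (x ∉ S ↔ σ x ∉ S) := by
    intro σ hσ hc x
    constructor
    · intro hx hσx
      apply hx
      have := hinv σ hσ hc (σ x) hσx
      rwa [(hσ x).2] at this
    · intro hσx hx
      exact hσx (hinv σ hσ hc x hx)
  -- the equiv to Fin (m - 2k)
  have hcard : Fintype.card {x : Fin m // x ∉ S} = m - 2 * k := by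
    have := Fintype.card_subtype_compl (fun x : Fin m => x ∈ S)
    rw [this, Fintype.card_fin]
    congr 1
    rw [← hScard]
    exact (Fintype.card_coe S).symm ▸ (Fintype.card_coe S)
  obtain ⟨e⟩ : Nonempty ({x : Fin m // x ∉ S} ≃ Fin (m - 2 * k)) :=
    ⟨Fintype.equivFinOfCardEq hcard⟩
  refine ⟨fun σ => ⟨(e.permCongr ((σ : Equiv.Perm (Fin m)).subtypePerm
      (fun x => (hpred σ.1 σ.2.1 σ.2.2 x).symm))), ?_⟩, ?_⟩
  · -- IsMatching of restricted perm
    obtain ⟨σ, hσ, hc⟩ := σ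
    intro y
    have happ : ∀ z : Fin (m - 2 * k),
        (e.permCongr (σ.subtypePerm (fun x => (hpred σ hσ hc x).symm))) z
          = e (σ.subtypePerm (fun x => (hpred σ hσ hc x).symm) (e.symm z)) := by
      intro z; rfl
    constructor
    · rw [happ]
      intro hcon
      have : (σ.subtypePerm (fun x => (hpred σ hσ hc x).symm)) (e.symm y) = e.symm y := by
        apply e.injective
        rw [hcon, Equiv.apply_symm_apply]
      have hval := congrArg Subtype.val this
      rw [Equiv.Perm.subtypePerm_apply] at hval
      exact (hσ (e.symm y).1).1 hval
    · rw [happ, happ]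
      rw [Equiv.symm_apply_apply]
      have : ∀ z : {x : Fin m // x ∉ S},
          (σ.subtypePerm (fun x => (hpred σ hσ hc x).symm))
            ((σ.subtypePerm (fun x => (hpred σ hσ hc x).symm)) z) = z := by
        intro z
        apply Subtype.ext
        simp only [Equiv.Perm.subtypePerm_apply]
        exact (hσ z.1).2
      rw [this, Equiv.apply_symm_apply]
  · -- injectivity
    rintro ⟨σ, hσ, hc⟩ ⟨σ', hσ', hc'⟩ h
    simp only [Subtype.mk.injEq] at h
    have h2 : (σ.subtypePerm (fun x => (hpred σ hσ hc x).symm))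
        = (σ'.subtypePerm (fun x => (hpred σ' hσ' hc' x).symm)) :=
      (Equiv.permCongr e).injective h
    apply Subtype.ext
    apply Equiv.ext
    intro x
    by_cases hx : x ∈ S
    · obtain ⟨i, c, rfl⟩ := (hmemS x).1 hx
      by_cases hcb : c = b i
      · subst hcb; rw [hc i, hc' i]
      · have hcb' : c = !b i := by cases c <;> cases h : b i <;> simp_all
        subst hcb'
        rw [cyc_back N2 E k w b hσ hc i, cyc_back N2 E k w b hσ' hc' i]
    · have h3 := congrArg (fun (p : Equiv.Perm {x : Fin m // x ∉ S}) => (p ⟨x, hx⟩ : {x : Fin m // x ∉ S})) h2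
      have := congrArg Subtype.val h3
      simpa using this
end event

section count
variable (N2 E k : ℕ) (hN : 0 < N2)

/-- The reversal of a cycle witness still witnesses the cycle. -/
lemma cyc_rev (w : ZMod k → Fin N2) (b : ZMod k → Bool)
    {σ : Equiv.Perm (Fin (2 * N2 + 2 * E))} (hσ : IsMatching σ)
    (hc : Cyc N2 E k w b σ) :
    Cyc N2 E k (fun i => w (-i)) (fun i => !b (-i)) σ := by
  intro i
  have h := cyc_back N2 E k w b hσ hc (-i)
  simp only []
  rw [h]
  have h1 : -i - 1 = -(i + 1) := by ring
  rw [h1, Bool.not_not]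

lemma wit_card (hk : 1 ≤ k) :
    Nat.card {p : (ZMod k → Fin N2) × (ZMod k → Bool) //
        Injective p.1 ∧ p.1 0 = ⟨0, hN⟩} ≤
      2 ^ k * (N2 - 1).descFactorial (k - 1) := by
  classical
  haveI : NeZero k := ⟨by omega⟩
  set v0 : Fin N2 := ⟨0, hN⟩
  set T := ({i : ZMod k // i ≠ 0} ↪ {v : Fin N2 // v ≠ v0}) × (ZMod k → Bool)
  have hJ : ∃ J : {p : (ZMod k → Fin N2) × (ZMod k → Bool) //
      Injective p.1 ∧ p.1 0 = v0} → T, Injective J := by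
    refine ⟨fun q => (⟨fun i => ⟨q.1.1 i.1, fun h => i.2 (q.2.1 (h.trans q.2.2.symm))⟩,
      fun i i' h => Subtype.ext (q.2.1 (congrArg Subtype.val h))⟩, q.1.2), ?_⟩
    rintro ⟨⟨w, b⟩, hw, h0⟩ ⟨⟨w', b'⟩, hw', h0'⟩ h
    have hb : b = b' := congrArg Prod.snd h
    have hemb := congrArg Prod.fst h
    apply Subtype.ext
    simp only [Prod.mk.injEq]
    refine ⟨funext fun i => ?_, hb⟩
    by_cases hi : i = 0
    · subst hi; exact h0.trans h0'.symm
    · have := congrArg (fun (f : {i : ZMod k // i ≠ 0} ↪ {v : Fin N2 // v ≠ v0}) =>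
        (f ⟨i, hi⟩ : {v : Fin N2 // v ≠ v0}).1) hemb
      exact this
  obtain ⟨J, hJinj⟩ := hJ
  calc Nat.card _ ≤ Nat.card T := Nat.card_le_card_of_injective J hJinj
    _ = 2 ^ k * (N2 - 1).descFactorial (k - 1) := by
        rw [Nat.card_prod, Nat.card_eq_fintype_card, Nat.card_eq_fintype_card,
          Fintype.card_embedding_eq, Fintype.card_fun, Fintype.card_bool, ZMod.card]
        have h1 : Fintype.card {i : ZMod k // i ≠ 0} = k - 1 := by
          rw [Fintype.card_subtype_compl, ZMod.card, Fintype.card_subtype_eq]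
        have h2 : Fintype.card {v : Fin N2 // v ≠ v0} = N2 - 1 := by
          rw [Fintype.card_subtype_compl, Fintype.card_fin, Fintype.card_subtype_eq]
        rw [h1, h2, mul_comm]

lemma badk_card (hk : 1 ≤ k) :
    2 * Nat.card {σ : Equiv.Perm (Fin (2 * N2 + 2 * E)) //
        IsMatching σ ∧ OnDisjointCycle N2 E k hN σ} ≤
      2 ^ k * (N2 - 1).descFactorial (k - 1) * M (2 * N2 + 2 * E - 2 * k) := by
  classical
  haveI : NeZero k := ⟨by omega⟩
  set m := 2 * N2 + 2 * E with hm
  set v0 : Fin N2 := ⟨0, hN⟩ with hv0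
  set Wt := {p : (ZMod k → Fin N2) × (ZMod k → Bool) // Injective p.1 ∧ p.1 0 = v0}
    with hWt
  set Bad := {σ : Equiv.Perm (Fin m) // IsMatching σ ∧ OnDisjointCycle N2 E k hN σ}
    with hBad
  -- uniform injections for each witness
  have hG : ∀ q : Wt, ∃ G' : Equiv.Perm (Fin m) → Equiv.Perm (Fin (m - 2 * k)),
      (∀ σ, (IsMatching σ ∧ Cyc N2 E k q.1.1 q.1.2 σ) → IsMatching (G' σ)) ∧
      (∀ σ σ', (IsMatching σ ∧ Cyc N2 E k q.1.1 q.1.2 σ) →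
        (IsMatching σ' ∧ Cyc N2 E k q.1.1 q.1.2 σ') → G' σ = G' σ' → σ = σ') := by
    intro q
    obtain ⟨G, hGinj⟩ := event_inj N2 E k q.1.1 q.1.2 hk q.2.1
    refine ⟨fun σ => if h : IsMatching σ ∧ Cyc N2 E k q.1.1 q.1.2 σ then (G ⟨σ, h⟩).1
      else 1, fun σ h => ?_, fun σ σ' h h' heq => ?_⟩
    · dsimp only
      rw [dif_pos h]; exact (G ⟨σ, h⟩).2
    · dsimp only at heq
      rw [dif_pos h, dif_pos h'] at heq
      have := hGinj (Subtype.ext heq)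
      exact congrArg Subtype.val this
  choose G hGmat hGinj using hG
  -- witness extraction
  have hwit : ∀ σ : Bad, ∃ q : Wt, Cyc N2 E k q.1.1 q.1.2 σ.1 := by
    intro σ
    obtain ⟨w, b, hw, h0, hc⟩ := σ.2.2
    exact ⟨⟨(w, b), hw, h0⟩, hc⟩
  choose qf hqf using hwit
  -- reversal
  let rev : Wt → Wt := fun q => ⟨(fun i => q.1.1 (-i), fun i => !q.1.2 (-i)),
    q.2.1.comp neg_injective, by simpa using q.2.2⟩
  have hrev_ne : ∀ q : Wt, rev q ≠ q := by
    intro q h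
    have h2 : (rev q).1.2 0 = q.1.2 0 := congrArg (fun (q : Wt) => q.1.2 0) h
    have h3 : (rev q).1.2 0 = !q.1.2 0 := by simp [rev]
    rw [h3] at h2
    exact Bool.not_ne_self _ h2
  have hrevc : ∀ σ : Bad, Cyc N2 E k (rev (qf σ)).1.1 (rev (qf σ)).1.2 σ.1 :=
    fun σ => cyc_rev N2 E k _ _ σ.2.1 (hqf σ)
  -- the big injection
  set Q : Bad × Bool → Wt := fun sb => if sb.2 then qf sb.1 else rev (qf sb.1) with hQ
  have hQc : ∀ sb : Bad × Bool, Cyc N2 E k (Q sb).1.1 (Q sb).1.2 sb.1.1 := by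
    rintro ⟨σ, bit⟩
    cases bit
    · simpa [hQ] using hrevc σ
    · simpa [hQ] using hqf σ
  have hF : ∃ F : Bad × Bool → Wt × {τ : Equiv.Perm (Fin (m - 2 * k)) // IsMatching τ},
      Injective F := by
    refine ⟨fun sb => (Q sb, ⟨G (Q sb) sb.1.1, hGmat _ _ ⟨sb.1.2.1, hQc sb⟩⟩), ?_⟩
    rintro ⟨σ, bit⟩ ⟨σ', bit'⟩ h
    have hq : Q (σ, bit) = Q (σ', bit') := congrArg Prod.fst h
    have hval : G (Q (σ, bit)) σ.1 = G (Q (σ', bit')) σ'.1 :=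
      congrArg (fun p => (Prod.snd p).1) h
    rw [← hq] at hval
    have hσ : σ.1 = σ'.1 :=
      hGinj (Q (σ, bit)) σ.1 σ'.1 ⟨σ.2.1, hQc (σ, bit)⟩
        ⟨σ'.2.1, hq ▸ hQc (σ', bit')⟩ hval
    have hσσ : σ = σ' := Subtype.ext hσ
    subst hσσ
    cases bit <;> cases bit'
    · rfl
    · exfalso
      simp only [hQ, if_true, if_false, Bool.false_eq_true] at hq
      exact hrev_ne (qf σ) hq
    · exfalso
      simp only [hQ, if_true, if_false, Bool.false_eq_true] at hq
      exact hrev_ne (qf σ) hq.symm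
    · rfl
  obtain ⟨F, hFinj⟩ := hF
  haveI : Finite Wt := Subtype.finite
  haveI : Finite {τ : Equiv.Perm (Fin (m - 2 * k)) // IsMatching τ} := Subtype.finite
  have hcard := Nat.card_le_card_of_injective F hFinj
  rw [Nat.card_prod, Nat.card_prod, Nat.card_eq_fintype_card (α := Bool),
    Fintype.card_bool] at hcard
  have hwc := wit_card N2 k hN hk
  calc 2 * Nat.card Bad = Nat.card Bad * 2 := by ring
    _ ≤ Nat.card Wt * Nat.card {τ : Equiv.Perm (Fin (m - 2 * k)) // IsMatching τ} :=
        hcard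
    _ ≤ (2 ^ k * (N2 - 1).descFactorial (k - 1)) * M (m - 2 * k) :=
        Nat.mul_le_mul_right _ hwc
end count

lemma odc_k_le (N2 E k : ℕ) (hN : 0 < N2) (hk : 1 ≤ k)
    {σ : Equiv.Perm (Fin (2 * N2 + 2 * E))} (h : OnDisjointCycle N2 E k hN σ) :
    k ≤ N2 := by
  haveI : NeZero k := ⟨by omega⟩
  obtain ⟨w, b, hw, -, -⟩ := h
  have := Fintype.card_le_of_injective w hw
  rwa [ZMod.card, Fintype.card_fin] at this

theorem key_nat (N2 E : ℕ) (hN : 0 < N2) :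
    2 * Nat.card {σ : Equiv.Perm (Fin (2 * N2 + 2 * E)) //
        IsMatching σ ∧ ∃ k, 1 ≤ k ∧ OnDisjointCycle N2 E k hN σ} ≤
      ∑ k ∈ Finset.Icc 1 N2,
        2 ^ k * (N2 - 1).descFactorial (k - 1) * M (2 * N2 + 2 * E - 2 * k) := by
  classical
  set m := 2 * N2 + 2 * E with hm
  have hstep : Nat.card {σ : Equiv.Perm (Fin m) //
      IsMatching σ ∧ ∃ k, 1 ≤ k ∧ OnDisjointCycle N2 E k hN σ} ≤
      ∑ k ∈ Finset.Icc 1 N2, Nat.card {σ : Equiv.Perm (Fin m) //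
        IsMatching σ ∧ OnDisjointCycle N2 E k hN σ} := by
    have hwit : ∀ σ : {σ : Equiv.Perm (Fin m) //
        IsMatching σ ∧ ∃ k, 1 ≤ k ∧ OnDisjointCycle N2 E k hN σ},
        ∃ k : Fin (N2 + 1), 1 ≤ (k : ℕ) ∧ OnDisjointCycle N2 E (k : ℕ) hN σ.1 := by
      intro σ
      obtain ⟨k, hk1, hk2⟩ := σ.2.2
      exact ⟨⟨k, by have := odc_k_le N2 E k hN hk1 hk2; omega⟩, hk1, hk2⟩
    choose kf hkf1 hkf2 using hwit
    have hFinj : Injective (fun σ : {σ : Equiv.Perm (Fin m) //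
        IsMatching σ ∧ ∃ k, 1 ≤ k ∧ OnDisjointCycle N2 E k hN σ} =>
        (⟨kf σ, ⟨σ.1, σ.2.1, hkf2 σ⟩⟩ : Σ j : Fin (N2 + 1),
          {σ : Equiv.Perm (Fin m) // IsMatching σ ∧ OnDisjointCycle N2 E (j : ℕ) hN σ})) := by
      intro σ σ' h
      have := congrArg (fun s : (Σ j : Fin (N2 + 1),
        {σ : Equiv.Perm (Fin m) // IsMatching σ ∧ OnDisjointCycle N2 E (j : ℕ) hN σ}) =>
        (s.2.1 : Equiv.Perm (Fin m))) h
      exact Subtype.ext this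
    have h1 := Nat.card_le_card_of_injective _ hFinj
    have h2 : Nat.card (Σ j : Fin (N2 + 1),
        {σ : Equiv.Perm (Fin m) // IsMatching σ ∧ OnDisjointCycle N2 E (j : ℕ) hN σ}) =
        ∑ j : Fin (N2 + 1), Nat.card {σ : Equiv.Perm (Fin m) //
          IsMatching σ ∧ OnDisjointCycle N2 E (j : ℕ) hN σ} := by
      rw [Nat.card_eq_fintype_card, Fintype.card_sigma]
      exact Finset.sum_congr rfl fun j _ => (Nat.card_eq_fintype_card).symm
    rw [h2] at h1
    refine h1.trans ?_
    rw [Fin.sum_univ_eq_sum_range (fun k => Nat.card {σ : Equiv.Perm (Fin m) //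
      IsMatching σ ∧ OnDisjointCycle N2 E k hN σ})]
    have hins : Finset.range (N2 + 1) = insert 0 (Finset.Icc 1 N2) := by
      ext x; simp; omega
    rw [hins, Finset.sum_insert (by simp)]
    have h0 : Nat.card {σ : Equiv.Perm (Fin m) //
        IsMatching σ ∧ OnDisjointCycle N2 E 0 hN σ} = 0 := by
      rw [Nat.card_eq_zero]
      left
      constructor
      rintro ⟨σ, -, w, b, hw, -, -⟩
      haveI := Finite.of_injective w hw
      exact not_finite (ZMod 0)
    omega
  calc 2 * Nat.card {σ : Equiv.Perm (Fin m) //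
        IsMatching σ ∧ ∃ k, 1 ≤ k ∧ OnDisjointCycle N2 E k hN σ}
      ≤ 2 * ∑ k ∈ Finset.Icc 1 N2, Nat.card {σ : Equiv.Perm (Fin m) //
          IsMatching σ ∧ OnDisjointCycle N2 E k hN σ} := by omega
    _ = ∑ k ∈ Finset.Icc 1 N2, 2 * Nat.card {σ : Equiv.Perm (Fin m) //
          IsMatching σ ∧ OnDisjointCycle N2 E k hN σ} := Finset.mul_sum _ _ _
    _ ≤ ∑ k ∈ Finset.Icc 1 N2,
          2 ^ k * (N2 - 1).descFactorial (k - 1) * M (m - 2 * k) :=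
        Finset.sum_le_sum fun k hk =>
          badk_card N2 E k hN (Finset.mem_Icc.mp hk).1

theorem key_real (N2 E : ℕ) (hN : 0 < N2) (hE : 1 ≤ E) :
    (Nat.card {σ : Equiv.Perm (Fin (2 * N2 + 2 * E)) //
        IsMatching σ ∧ ∃ k, 1 ≤ k ∧ OnDisjointCycle N2 E k hN σ} : ℝ) /
      (Nat.card {σ : Equiv.Perm (Fin (2 * N2 + 2 * E)) // IsMatching σ} : ℝ) ≤
      1 / (2 * (E : ℝ) - 1) := by
  classical
  set m := 2 * N2 + 2 * E with hm
  set B := Nat.card {σ : Equiv.Perm (Fin m) //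
      IsMatching σ ∧ ∃ k, 1 ≤ k ∧ OnDisjointCycle N2 E k hN σ} with hB
  have hMm : M m = Nat.card {σ : Equiv.Perm (Fin m) // IsMatching σ} := rfl
  rw [← hMm]
  have hMmpos : 0 < M m := by
    have : m = 2 * (N2 + E) := by omega
    rw [this]; exact M_pos _
  set μ : ℝ := (m : ℝ) with hμ
  have hμval : μ = 2 * N2 + 2 * E := by
    rw [hμ, hm]; push_cast; ring
  have hEpos : (1 : ℝ) ≤ (E : ℝ) := by exact_mod_cast hE
  have hNpos : (1 : ℝ) ≤ (N2 : ℝ) := by exact_mod_cast hN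
  have hμ1 : 2 * (N2 : ℝ) < μ - 1 := by rw [hμval]; linarith
  have hμ1pos : (0 : ℝ) < μ - 1 := by linarith
  set r : ℝ := 2 * N2 / (μ - 1) with hr
  have hr0 : 0 ≤ r := div_nonneg (by positivity) hμ1pos.le
  have hr1 : r < 1 := by rw [hr, div_lt_one hμ1pos]; exact hμ1
  have h2E : (0 : ℝ) < 2 * E - 1 := by linarith
  -- the descending product
  set Qd : ℕ → ℝ := fun k => ∏ i ∈ Finset.range k, (μ - 1 - 2 * i) with hQd
  have hQdpos : ∀ k, k ≤ N2 → 0 < Qd k := by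
    intro k hk
    apply Finset.prod_pos
    intro i hi
    have hik : (i : ℝ) < k := by exact_mod_cast Finset.mem_range.mp hi
    have hkN : (k : ℝ) ≤ N2 := by exact_mod_cast hk
    rw [hμval]; linarith
  -- relation between Qd and the nat product
  have hQdnat : ∀ k, k ≤ N2 →
      Qd k = ((∏ i ∈ Finset.range k, ((m - 2 * k) + 2 * i + 1) : ℕ) : ℝ) := by
    intro k hk
    have h2k : 2 * k ≤ m := by omega
    simp only [hQd]
    rw [← Finset.prod_range_reflect (fun i => (μ - 1 - 2 * i)) k]
    rw [Nat.cast_prod]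
    apply Finset.prod_congr rfl
    intro i hi
    have hik : i < k := Finset.mem_range.mp hi
    have e1 : ((m - 2 * k + 2 * i + 1 : ℕ) : ℝ) = μ - 2 * k + 2 * i + 1 := by
      rw [hμ]; push_cast [Nat.cast_sub h2k]; ring
    have e2 : ((k - 1 - i : ℕ) : ℝ) = (k : ℝ) - 1 - i := by
      have h3 : i ≤ k - 1 := by omega
      push_cast [Nat.cast_sub h3, Nat.cast_sub (by omega : 1 ≤ k)]
      ring
    rw [e1, e2]
    ring
  -- per-k bound on M
  have hMk : ∀ k, 1 ≤ k → k ≤ N2 → Qd k * (M (m - 2 * k) : ℝ) ≤ M m := by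
    intro k h1 h2
    rw [hQdnat k h2]
    have h2k : 2 * k ≤ m := by omega
    have := M_prod (m - 2 * k) k
    have heq : m - 2 * k + 2 * k = m := by omega
    rw [heq] at this
    calc ((∏ i ∈ Finset.range k, ((m - 2 * k) + 2 * i + 1) : ℕ) : ℝ) * M (m - 2 * k)
        = ((M (m - 2 * k) * ∏ i ∈ Finset.range k, ((m - 2 * k) + 2 * i + 1) : ℕ) : ℝ) := by
          push_cast; ring
      _ ≤ (M m : ℝ) := by exact_mod_cast this
  -- the inductive term bound
  have hind : ∀ j : ℕ, j + 1 ≤ N2 →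
      (2 : ℝ) ^ (j + 1) * ((N2 - 1).descFactorial j : ℝ) ≤
        2 / (μ - 1) * r ^ j * Qd (j + 1) := by
    intro j
    induction j with
    | zero =>
      intro _
      have h1 : Qd 1 = μ - 1 := by simp [hQd]
      have h2 : 2 / (μ - 1) * r ^ 0 * Qd 1 = 2 := by
        rw [h1, pow_zero, mul_one, div_mul_cancel₀]
        exact ne_of_gt hμ1pos
      rw [h2]
      simp
    | succ j ih =>
      intro hj2
      have hj1 : j + 1 ≤ N2 := by omega
      have ihj := ih hj1
      have hQs : Qd (j + 2) = Qd (j + 1) * (μ - 1 - 2 * (j + 1)) := by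
        simp only [hQd, Finset.prod_range_succ]
        push_cast; ring_nf
      have hdesc : ((N2 - 1).descFactorial (j + 1) : ℝ) =
          ((N2 - 1 - j : ℕ) : ℝ) * ((N2 - 1).descFactorial j : ℝ) := by
        rw [Nat.descFactorial_succ]; push_cast; ring
      have hcast : ((N2 - 1 - j : ℕ) : ℝ) = (N2 : ℝ) - 1 - j := by
        have h1 : j ≤ N2 - 1 := by omega
        push_cast [Nat.cast_sub h1, Nat.cast_sub (by omega : 1 ≤ N2)]
        ring
      have hfac : 2 * ((N2 : ℝ) - 1 - j) ≤ r * (μ - 1 - 2 * (j + 1)) := by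
        rw [hr, div_mul_eq_mul_div, le_div_iff₀ hμ1pos]
        have hjN : (j : ℝ) + 2 ≤ N2 := by exact_mod_cast hj2
        nlinarith [hμ1]
      have hμ3 : (0 : ℝ) ≤ μ - 1 - 2 * (j + 1) := by
        have hjN : (j : ℝ) + 2 ≤ N2 := by exact_mod_cast hj2
        rw [hμval]; linarith
      calc (2 : ℝ) ^ (j + 2) * ((N2 - 1).descFactorial (j + 1) : ℝ)
          = ((2 : ℝ) ^ (j + 1) * ((N2 - 1).descFactorial j : ℝ)) *
              (2 * ((N2 : ℝ) - 1 - j)) := by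
            rw [hdesc, hcast]; ring
        _ ≤ (2 / (μ - 1) * r ^ j * Qd (j + 1)) * (r * (μ - 1 - 2 * (j + 1))) := by
            apply mul_le_mul ihj hfac _ _
            · have hjN : (j : ℝ) ≤ N2 := by exact_mod_cast (by omega : j ≤ N2)
              nlinarith [hNpos]
            · exact mul_nonneg (mul_nonneg (div_nonneg (by norm_num) hμ1pos.le)
                (pow_nonneg hr0 j)) (hQdpos _ hj1).le
        _ = 2 / (μ - 1) * r ^ (j + 1) * Qd (j + 2) := by
            rw [hQs]; ring
  -- combine
  have hkey := key_nat N2 E hN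
  rw [← hB, ← hm] at hkey
  have hkeyR : 2 * (B : ℝ) ≤ ∑ k ∈ Finset.Icc 1 N2,
      (2 : ℝ) ^ k * ((N2 - 1).descFactorial (k - 1) : ℝ) * (M (m - 2 * k) : ℝ) := by
    calc 2 * (B : ℝ) = ((2 * B : ℕ) : ℝ) := by push_cast; ring
      _ ≤ ((∑ k ∈ Finset.Icc 1 N2,
            2 ^ k * (N2 - 1).descFactorial (k - 1) * M (m - 2 * k) : ℕ) : ℝ) := by
          exact_mod_cast hkey
      _ = _ := by push_cast; ring
  have hsum : ∑ k ∈ Finset.Icc 1 N2,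
      (2 : ℝ) ^ k * ((N2 - 1).descFactorial (k - 1) : ℝ) * (M (m - 2 * k) : ℝ) ≤
      ∑ k ∈ Finset.Icc 1 N2, 2 / (μ - 1) * r ^ (k - 1) * (M m : ℝ) := by
    apply Finset.sum_le_sum
    intro k hk
    obtain ⟨hk1, hk2⟩ := Finset.mem_Icc.mp hk
    have hj : k - 1 + 1 = k := by omega
    have h1 := hind (k - 1) (by omega)
    rw [hj] at h1
    calc (2 : ℝ) ^ k * ((N2 - 1).descFactorial (k - 1) : ℝ) * (M (m - 2 * k) : ℝ)
        ≤ (2 / (μ - 1) * r ^ (k - 1) * Qd k) * (M (m - 2 * k) : ℝ) := by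
          apply mul_le_mul_of_nonneg_right h1 (Nat.cast_nonneg _)
      _ = (2 / (μ - 1) * r ^ (k - 1)) * (Qd k * (M (m - 2 * k) : ℝ)) := by ring
      _ ≤ (2 / (μ - 1) * r ^ (k - 1)) * (M m : ℝ) := by
          apply mul_le_mul_of_nonneg_left (hMk k hk1 hk2)
            (mul_nonneg (div_nonneg (by norm_num) hμ1pos.le) (pow_nonneg hr0 _))
      _ = 2 / (μ - 1) * r ^ (k - 1) * (M m : ℝ) := by ring
  have hgeom : ∑ k ∈ Finset.Icc 1 N2, r ^ (k - 1) ≤ 1 / (1 - r) := by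
    have himg : Finset.Icc 1 N2 = Finset.image (· + 1) (Finset.range N2) := by
      ext x
      simp only [Finset.mem_Icc, Finset.mem_image, Finset.mem_range]
      constructor
      · rintro ⟨h1, h2⟩; exact ⟨x - 1, by omega, by omega⟩
      · rintro ⟨a, ha, rfl⟩; omega
    rw [himg, Finset.sum_image (by intro a _ b _ h; simp only at h; omega)]
    simp only [Nat.add_sub_cancel]
    rw [le_div_iff₀ (by linarith : (0:ℝ) < 1 - r)]
    have hgm := geom_sum_mul r N2
    have hrn : (0 : ℝ) ≤ r ^ N2 := by positivity
    nlinarith [hgm]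
  have hsum2 : ∑ k ∈ Finset.Icc 1 N2, 2 / (μ - 1) * r ^ (k - 1) * (M m : ℝ) ≤
      2 / (μ - 1) * (1 / (1 - r)) * (M m : ℝ) := by
    rw [← Finset.sum_mul, ← Finset.mul_sum]
    apply mul_le_mul_of_nonneg_right _ (Nat.cast_nonneg _)
    apply mul_le_mul_of_nonneg_left hgeom (div_nonneg (by norm_num) hμ1pos.le)
  -- final arithmetic
  rw [div_le_div_iff₀ (by exact_mod_cast hMmpos) h2E]
  have hfinal : 2 / (μ - 1) * (1 / (1 - r)) = 2 / (2 * (E : ℝ) - 1) := by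
    rw [hr]
    rw [div_mul_div_comm]
    congr 1
    · ring
    · field_simp
      rw [hμval]; ring
  have : 2 * (B : ℝ) ≤ 2 / (2 * (E : ℝ) - 1) * (M m : ℝ) := by
    calc 2 * (B : ℝ) ≤ _ := hkeyR
      _ ≤ _ := hsum
      _ ≤ _ := hsum2
      _ = 2 / (2 * (E : ℝ) - 1) * (M m : ℝ) := by rw [hfinal]
  have hM0 : (0 : ℝ) < (M m : ℝ) := by exact_mod_cast hMmpos
  rw [div_mul_eq_mul_div, le_div_iff₀ h2E] at this
  linarith

theorem prob_on_any_cycle (ε : ℕ → ℝ) (N2 E : ℕ → ℕ) (hN : ∀ n, 0 < N2 n)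
    (hεpos : ∀ n, 0 < ε n)
    (hε0 : Tendsto ε atTop (nhds 0))
    (hε3 : Tendsto (fun n => ε n ^ 3 * n) atTop atTop)
    (hN2 : Tendsto (fun n => (N2 n : ℝ) / (ε n ^ 2 * n)) atTop (nhds 2))
    (hE : Tendsto (fun n => (E n : ℝ) / (ε n ^ 3 * n)) atTop (nhds 2))
    (P : ℕ → ℝ)
    (hP : ∀ n, P n =
      (Nat.card {σ : Equiv.Perm (Fin (2 * N2 n + 2 * E n)) //
          IsMatching σ ∧ ∃ k, 1 ≤ k ∧ OnDisjointCycle (N2 n) (E n) k (hN n) σ} : ℝ) /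
        (Nat.card {σ : Equiv.Perm (Fin (2 * N2 n + 2 * E n)) // IsMatching σ})) :
    (∀ c : ℝ, 1 < c → ∀ᶠ n in atTop, P n ≤ c / (4 * ε n ^ 3 * n)) ∧
      Tendsto P atTop (nhds 0) := by
  -- E n → ∞ (as reals)
  have hEinf : Tendsto (fun n => (E n : ℝ)) atTop atTop := by
    have h := hE.pos_mul_atTop (by norm_num : (0:ℝ) < 2) hε3
    refine h.congr' ?_
    filter_upwards [hε3.eventually_gt_atTop 0] with n hn
    exact div_mul_cancel₀ _ hn.ne'
  have hE1 : ∀ᶠ n in atTop, 1 ≤ E n := by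
    filter_upwards [hEinf.eventually_ge_atTop 1] with n hn
    exact_mod_cast hn
  have hPle : ∀ᶠ n in atTop, P n ≤ 1 / (2 * (E n : ℝ) - 1) := by
    filter_upwards [hE1] with n hn
    rw [hP n]
    exact key_real (N2 n) (E n) (hN n) hn
  have hPnn : ∀ n, 0 ≤ P n := by
    intro n
    rw [hP n]
    positivity
  -- the ratio (2E-1)/(ε³n) → 4
  have hratio : Tendsto (fun n => (2 * (E n : ℝ) - 1) / (ε n ^ 3 * n)) atTop (nhds 4) := by
    have h1 : Tendsto (fun n => 2 * ((E n : ℝ) / (ε n ^ 3 * n)) - 1 / (ε n ^ 3 * n))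
        atTop (nhds (2 * 2 - 0)) := by
      exact Tendsto.sub (hE.const_mul 2) (tendsto_const_nhds.div_atTop hε3)
    have h2 : (2 * (2:ℝ) - 0) = 4 := by norm_num
    rw [h2] at h1
    refine h1.congr' ?_
    filter_upwards [hε3.eventually_gt_atTop 0] with n hn
    field_simp
  constructor
  · intro c hc
    have hgc : ∀ᶠ n in atTop, 4 / c < (2 * (E n : ℝ) - 1) / (ε n ^ 3 * n) := by
      apply hratio.eventually
      apply eventually_gt_nhds
      calc 4 / c < 4 / 1 :=
            div_lt_div_of_pos_left (by norm_num) (by norm_num) hc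
        _ = 4 := by norm_num
    filter_upwards [hgc, hPle, hE1, hε3.eventually_gt_atTop 0] with n hg hle hE1n hpos
    have hE1R : (1:ℝ) ≤ E n := by exact_mod_cast hE1n
    have h2E : (0:ℝ) < 2 * E n - 1 := by linarith
    have hcpos : (0:ℝ) < c := by linarith
    refine hle.trans ?_
    rw [div_le_div_iff₀ h2E (by linarith : (0:ℝ) < 4 * ε n ^ 3 * n)]
    rw [div_lt_div_iff₀ hcpos hpos] at hg
    nlinarith
  · have hupper : Tendsto (fun n => 1 / (2 * (E n : ℝ) - 1)) atTop (nhds 0) := by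
      apply Tendsto.div_atTop tendsto_const_nhds
      apply tendsto_atTop_add_const_right
      exact hEinf.const_mul_atTop (by norm_num)
    exact squeeze_zero' (Eventually.of_forall hPnn) hPle hupper
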